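/- Equivalence of the two forms of the discrete Wigner function: with ψ̂_k = (1/√N)Σ_m ψ_m e^{-2πikm/N}, one has (1/(2N)) Σ_{k=0}^{N-1} conj(ψ̂_k) ψ̂_{x-k} e^{-iπy(2k-x)/N} = (1/(2N)) Σ_{k=0}^{N-1} conj(ψ_k) ψ_{y-k} e^{iπx(2k-y)/N} for all integers x,y. -/

import Mathlib

open Finset

private lemma expone' (N : ℕ) (hN : 0 < N) (s : ℤ) (hd : (N : ℤ) ∣ s) :
    Complex.exp (2 * Real.pi * Complex.I * s / N) = 1 := by
  have hNC : (N : ℂ) ≠ 0 := Nat.cast_ne_zero.mpr hN.ne'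
  obtain ⟨c, rfl⟩ := hd
  rw [show (2 * Real.pi * Complex.I * ((N : ℤ) * c : ℤ) / N : ℂ)
      = c * (2 * Real.pi * Complex.I) by push_cast; field_simp]
  exact Complex.exp_int_mul_two_pi_mul_I c

private lemma orth' (N : ℕ) (hN : 0 < N) (t : ℤ) :
    ∑ k ∈ range N, (Complex.exp (2 * Real.pi * Complex.I * t / N)) ^ k
      = if (N : ℤ) ∣ t then (N : ℂ) else 0 := by
  have hNC : (N : ℂ) ≠ 0 := Nat.cast_ne_zero.mpr hN.ne'
  by_cases hd : (N : ℤ) ∣ t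
  · rw [if_pos hd, expone' N hN t hd]; simp
  · have hζ : Complex.exp (2 * Real.pi * Complex.I * t / N) ≠ 1 := by
      intro hc
      rw [Complex.exp_eq_one_iff] at hc
      obtain ⟨n, hn⟩ := hc
      apply hd
      refine ⟨n, ?_⟩
      have h2 : (2 * (Real.pi : ℂ) * Complex.I) ≠ 0 := by
        simp [Real.pi_ne_zero, Complex.I_ne_zero]
      have ht : (t : ℂ) = N * n := by
        field_simp at hn
        exact mul_left_cancel₀ h2 (show 2 * (Real.pi : ℂ) * Complex.I * t
          = 2 * (Real.pi : ℂ) * Complex.I * (N * n) by linear_combination (2 * (Real.pi : ℂ) * Complex.I) * hn)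
      exact_mod_cast ht
    rw [geom_sum_eq hζ]
    have hN1 : Complex.exp (2 * Real.pi * Complex.I * t / N) ^ N = 1 := by
      rw [← Complex.exp_nat_mul,
        show (N : ℂ) * (2 * Real.pi * Complex.I * t / N)
          = t * (2 * Real.pi * Complex.I) by field_simp]
      exact Complex.exp_int_mul_two_pi_mul_I t
    simp [hN1, if_neg hd]

/-- Discrete Wigner function of `ψ : ℤ/N → ℂ`:
`W(x,y) = (1/(2N)) Σ_{k=0}^{N-1} conj(ψ_k) ψ_{y-k} e^{iπx(2k-y)/N}`. -/
noncomputable def W (N : ℕ) (ψ : ZMod N → ℂ) (x y : ℤ) : ℂ :=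
  (1 / (2 * (N : ℂ))) * ∑ k ∈ Finset.range N,
    (starRingEnd ℂ) (ψ (k : ZMod N)) * ψ ((y - (k : ℤ) : ℤ) : ZMod N) *
      Complex.exp (Real.pi * Complex.I * (x : ℂ) * (2 * (k : ℂ) - (y : ℂ)) / (N : ℂ))

/-- Equivalence of the momentum-side and position-side forms of the discrete
Wigner function, where `ψ̂` is the normalized DFT of `ψ`. -/
theorem stmt13 (N : ℕ) (hN : 0 < N) (ψ ψh : ZMod N → ℂ)
    (h : ∀ k : ℤ, ψh (k : ZMod N) = ((Real.sqrt N : ℂ))⁻¹ *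
      ∑ m ∈ Finset.range N, ψ (m : ZMod N) *
        Complex.exp (-2 * Real.pi * Complex.I * (k : ℂ) * (m : ℂ) / (N : ℂ))) :
    ∀ x y : ℤ,
      (1 / (2 * (N : ℂ))) * ∑ k ∈ Finset.range N,
        (starRingEnd ℂ) (ψh (k : ZMod N)) * ψh ((x - (k : ℤ) : ℤ) : ZMod N) *
          Complex.exp (-(Real.pi * Complex.I * (y : ℂ) * (2 * (k : ℂ) - (x : ℂ)) / (N : ℂ)))
      = W N ψ x y := by
  intro x y
  have hNC : (N : ℂ) ≠ 0 := Nat.cast_ne_zero.mpr hN.ne'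
  have hNZ : (N : ℤ) ≠ 0 := Int.natCast_ne_zero.mpr hN.ne'
  set ω : ℂ := Complex.exp (Real.pi * Complex.I / N) with hωdef
  have hω0 : ω ≠ 0 := Complex.exp_ne_zero _
  -- ω ^ t = exp(π I t / N)
  have hω : ∀ t : ℤ, Complex.exp (Real.pi * Complex.I * t / N) = ω ^ t := by
    intro t
    rw [hωdef, ← Complex.exp_int_mul]
    congr 1; ring
  -- ω ^ (2 N s) = 1
  have hω1 : ∀ s : ℤ, ω ^ (2 * (N : ℤ) * s) = 1 := by
    intro s
    rw [← hω]
    rw [show (Real.pi * Complex.I * ((2 * (N:ℤ) * s : ℤ) : ℂ) / N : ℂ)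
        = 2 * Real.pi * Complex.I * ((N * s : ℤ) : ℂ) / N by push_cast; ring]
    exact expone' N hN _ ⟨s, rfl⟩
  set c : ℂ := ((Real.sqrt N : ℂ))⁻¹ with hcdef
  have hcc : c * c = (N : ℂ)⁻¹ := by
    rw [hcdef, ← mul_inv]
    norm_cast
    rw [Real.mul_self_sqrt (Nat.cast_nonneg N)]
    push_cast
    ring
  have hcconj : (starRingEnd ℂ) c = c := by
    rw [hcdef]
    simp [Complex.conj_ofReal]
  -- L1 : conjugate of ψh
  have L1 : ∀ k : ℕ, (starRingEnd ℂ) (ψh (k : ZMod N))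
      = c * ∑ m ∈ range N, (starRingEnd ℂ) (ψ (m : ZMod N)) * ω ^ (2 * (k : ℤ) * m) := by
    intro k
    have hk : ((k : ℤ) : ZMod N) = (k : ZMod N) := by push_cast; ring
    rw [← hk, h (k : ℤ), map_mul, hcconj, map_sum]
    congr 1
    refine Finset.sum_congr rfl fun m _ => ?_
    rw [map_mul]
    congr 1
    rw [← Complex.exp_conj]
    rw [← hω (2 * (k : ℤ) * m)]
    congr 1
    simp only [map_div₀, map_mul, map_neg, Complex.conj_I, Complex.conj_ofReal,
      map_ofNat, map_intCast, map_natCast]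
    push_cast
    ring
  -- L2 : ψh at x - k
  have L2 : ∀ k : ℕ, ψh ((x - (k : ℤ) : ℤ) : ZMod N)
      = c * ∑ n ∈ range N, ψ (n : ZMod N) * ω ^ (-2 * (x - (k : ℤ)) * n) := by
    intro k
    rw [h (x - (k : ℤ))]
    congr 1
    refine Finset.sum_congr rfl fun n _ => ?_
    congr 1
    rw [← hω (-2 * (x - (k : ℤ)) * n)]
    congr 1
    push_cast
    ring
  -- L3 : the explicit exponential as ω-power
  have L3 : ∀ k : ℕ, Complex.exp (-(Real.pi * Complex.I * (y : ℂ)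
        * (2 * (k : ℂ) - (x : ℂ)) / (N : ℂ)))
      = ω ^ (-(y * (2 * (k : ℤ) - x))) := by
    intro k
    rw [← hω (-(y * (2 * (k : ℤ) - x)))]
    congr 1
    push_cast
    ring
  -- Step: rewrite each k-summand as a double sum
  have key : ∀ k ∈ range N,
      (starRingEnd ℂ) (ψh (k : ZMod N)) * ψh ((x - (k : ℤ) : ℤ) : ZMod N) *
        Complex.exp (-(Real.pi * Complex.I * (y : ℂ) * (2 * (k : ℂ) - (x : ℂ)) / (N : ℂ)))
      = (N : ℂ)⁻¹ * ∑ m ∈ range N, ∑ n ∈ range N,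
          (starRingEnd ℂ) (ψ (m : ZMod N)) * ψ (n : ZMod N)
            * (ω ^ (2 * ((m : ℤ) + n - y))) ^ k * ω ^ (x * y - 2 * x * n) := by
    intro k _
    rw [L1 k, L2 k, L3 k]
    rw [show (c * ∑ m ∈ range N, (starRingEnd ℂ) (ψ (m : ZMod N)) * ω ^ (2 * (k : ℤ) * m))
          * (c * ∑ n ∈ range N, ψ (n : ZMod N) * ω ^ (-2 * (x - (k : ℤ)) * n))
          * ω ^ (-(y * (2 * (k : ℤ) - x)))
        = (c * c) * (((∑ m ∈ range N, (starRingEnd ℂ) (ψ (m : ZMod N)) * ω ^ (2 * (k : ℤ) * m))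
          * (∑ n ∈ range N, ψ (n : ZMod N) * ω ^ (-2 * (x - (k : ℤ)) * n)))
          * ω ^ (-(y * (2 * (k : ℤ) - x)))) by ring, hcc]
    congr 1
    rw [Finset.sum_mul_sum, Finset.sum_mul]
    refine Finset.sum_congr rfl fun m _ => ?_
    rw [Finset.sum_mul]
    refine Finset.sum_congr rfl fun n _ => ?_
    rw [show ((starRingEnd ℂ) (ψ (m : ZMod N)) * ω ^ (2 * (k : ℤ) * m)
          * (ψ (n : ZMod N) * ω ^ (-2 * (x - (k : ℤ)) * n)))
          * ω ^ (-(y * (2 * (k : ℤ) - x)))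
        = (starRingEnd ℂ) (ψ (m : ZMod N)) * ψ (n : ZMod N)
          * (ω ^ (2 * (k : ℤ) * m) * ω ^ (-2 * (x - (k : ℤ)) * n)
            * ω ^ (-(y * (2 * (k : ℤ) - x)))) by ring]
    rw [← zpow_add₀ hω0, ← zpow_add₀ hω0]
    have he : 2 * (k : ℤ) * m + -2 * (x - (k : ℤ)) * n + -(y * (2 * (k : ℤ) - x))
        = 2 * ((m : ℤ) + n - y) * k + (x * y - 2 * x * n) := by ring
    rw [he, zpow_add₀ hω0, zpow_mul, zpow_natCast]
    ring
  rw [Finset.sum_congr rfl key, ← Finset.mul_sum]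
  -- swap sums so k is innermost
  rw [Finset.sum_comm]
  have swap2 : ∑ m ∈ range N, ∑ k ∈ range N, ∑ n ∈ range N,
        (starRingEnd ℂ) (ψ (m : ZMod N)) * ψ (n : ZMod N)
          * (ω ^ (2 * ((m : ℤ) + n - y))) ^ k * ω ^ (x * y - 2 * x * n)
      = ∑ m ∈ range N, ∑ n ∈ range N,
          (starRingEnd ℂ) (ψ (m : ZMod N)) * ψ (n : ZMod N) * ω ^ (x * y - 2 * x * n)
            * ∑ k ∈ range N, (ω ^ (2 * ((m : ℤ) + n - y))) ^ k := by
    refine Finset.sum_congr rfl fun m _ => ?_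
    rw [Finset.sum_comm]
    refine Finset.sum_congr rfl fun n _ => ?_
    rw [Finset.mul_sum]
    refine Finset.sum_congr rfl fun k _ => ?_
    ring
  rw [swap2]
  -- apply orthogonality
  have horth : ∀ m n : ℕ, ∑ k ∈ range N, (ω ^ (2 * ((m : ℤ) + n - y))) ^ k
      = if (N : ℤ) ∣ ((m : ℤ) + n - y) then (N : ℂ) else 0 := by
    intro m n
    have hb : ω ^ (2 * ((m : ℤ) + n - y))
        = Complex.exp (2 * Real.pi * Complex.I * (((m : ℤ) + n - y : ℤ) : ℂ) / N) := by
      rw [← hω (2 * ((m : ℤ) + n - y))]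
      congr 1
      push_cast
      ring
    rw [hb]
    exact orth' N hN _
  rw [Finset.sum_congr rfl fun m _ => Finset.sum_congr rfl fun n _ => by rw [horth m n]]
  -- collapse the n-sum using the Kronecker delta
  have coll : ∀ m ∈ range N,
      (∑ n ∈ range N, (starRingEnd ℂ) (ψ (m : ZMod N)) * ψ (n : ZMod N)
          * ω ^ (x * y - 2 * x * n) * (if (N : ℤ) ∣ ((m : ℤ) + n - y) then (N : ℂ) else 0))
      = (N : ℂ) * ((starRingEnd ℂ) (ψ (m : ZMod N)) * ψ ((y - (m : ℤ) : ℤ) : ZMod N)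
          * ω ^ (x * (2 * (m : ℤ) - y))) := by
    intro m _
    have hmod0 : (0 : ℤ) ≤ (y - m) % N := Int.emod_nonneg _ hNZ
    have hmodlt : (y - m) % N < N := Int.emod_lt_of_pos _ (by exact_mod_cast hN)
    set n₀ : ℕ := ((y - m) % N).toNat with hn₀def
    have hn₀ : (n₀ : ℤ) = (y - m) % N := Int.toNat_of_nonneg hmod0
    have hn₀mem : n₀ ∈ range N := by
      rw [Finset.mem_range]
      exact_mod_cast hn₀ ▸ hmodlt
    rw [Finset.sum_eq_single_of_mem n₀ hn₀mem]
    · have hdvd : (N : ℤ) ∣ ((m : ℤ) + n₀ - y) := by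
        refine ⟨-((y - m) / N), ?_⟩
        have := Int.mul_ediv_add_emod (y - m) N
        rw [hn₀]
        linarith
      rw [if_pos hdvd]
      have hψ : ψ (n₀ : ZMod N) = ψ ((y - (m : ℤ) : ℤ) : ZMod N) := by
        congr 1
        have : ((n₀ : ℤ) : ZMod N) = ((y - (m : ℤ) : ℤ) : ZMod N) := by
          rw [ZMod.intCast_eq_intCast_iff]
          unfold Int.ModEq
          rw [hn₀, Int.emod_emod_of_dvd _ dvd_rfl]
        exact_mod_cast this
      have hpow : ω ^ (x * y - 2 * x * n₀) = ω ^ (x * (2 * (m : ℤ) - y)) := by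
        have hq : (n₀ : ℤ) = (y - m) - N * ((y - m) / N) := by
          rw [hn₀, Int.emod_def]
        rw [show x * y - 2 * x * (n₀ : ℤ)
            = x * (2 * (m : ℤ) - y) + 2 * (N : ℤ) * (x * ((y - m) / N)) by rw [hq]; ring,
          zpow_add₀ hω0, hω1, mul_one]
      rw [hψ, hpow]
      ring
    · intro n hn hne
      rw [if_neg, mul_zero]
      intro hdvd
      apply hne
      -- n ≡ y - m mod N and both n, n₀ in [0, N)
      have h1 : (n : ℤ) % N = (y - m) % N := by
        obtain ⟨q, hq⟩ := hdvd
        have : (n : ℤ) = (y - m) + N * q := by linarith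
        rw [this, Int.add_mul_emod_self_left]
      have h2 : (n : ℤ) % N = (n : ℤ) := by
        apply Int.emod_eq_of_lt (Int.natCast_nonneg n)
        exact_mod_cast Finset.mem_range.mp hn
      have : (n : ℤ) = (n₀ : ℤ) := by rw [hn₀, ← h1, h2]
      exact_mod_cast this
  rw [Finset.sum_congr rfl coll, ← Finset.mul_sum]
  rw [show (N : ℂ)⁻¹ * ((N : ℂ) * ∑ m ∈ range N,
        (starRingEnd ℂ) (ψ (m : ZMod N)) * ψ ((y - (m : ℤ) : ℤ) : ZMod N)
          * ω ^ (x * (2 * (m : ℤ) - y)))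
      = ∑ m ∈ range N, (starRingEnd ℂ) (ψ (m : ZMod N)) * ψ ((y - (m : ℤ) : ℤ) : ZMod N)
          * ω ^ (x * (2 * (m : ℤ) - y)) by field_simp]
  unfold W
  congr 1
  refine Finset.sum_congr rfl fun k _ => ?_
  congr 1
  rw [← hω (x * (2 * (k : ℤ) - y))]
  congr 1
  push_cast
  ring
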